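/- arXiv:1507.00793 — 3 statements merged into one kernel-verified Lean document; each statement's English description precedes it below -/
import Mathlib

section
/- Battle's first biorthogonality identity: Let g, h ∈ L²(ℝ) be such that t ↦ t·g(t) and t ↦ t·h(t) belong to L²(ℝ), and suppose ⟨g, π(k,l)h⟩ = 1 if (k,l) = (0,0) and 0 otherwise, for all k, l ∈ ℤ. Then for all k, l ∈ ℤ one has ⟨∇₁g, π(k,l)h⟩ = −⟨π(−k,−l)g, ∇₁h⟩, where (∇₁u)(t) = 2πi t u(t). -/
open MeasureTheory Complex

noncomputable section

/-- The time–frequency shift `π(x,ω)`: `(π(x,ω)g)(t) = e^{2πiωt} g(t-x)`. -/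
def tfShift (x ω : ℝ) (g : ℝ → ℂ) : ℝ → ℂ :=
  fun t => Complex.exp (2 * Real.pi * Complex.I * ω * t) * g (t - x)

/-- The `L²` inner product `⟨f,g⟩ = ∫ f(t) conj (g(t)) dt`, linear in the first argument. -/
def L2inner (f g : ℝ → ℂ) : ℂ := ∫ t : ℝ, f t * (starRingEnd ℂ) (g t)

/-- The covariant derivative `(∇₁u)(t) = 2πi t u(t)` (the case `θ = 1`). -/
def nabla₁ (u : ℝ → ℂ) : ℝ → ℂ :=
  fun t => 2 * Real.pi * Complex.I * (t : ℂ) * u t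

lemma memL2_conj {f : ℝ → ℂ} (hf : MemLp f 2 (volume : Measure ℝ)) :
    MemLp (fun t => (starRingEnd ℂ) (f t)) 2 (volume : Measure ℝ) :=
  MemLp.of_le hf (Complex.continuous_conj.comp_aestronglyMeasurable hf.1)
    (Filter.Eventually.of_forall fun x => by simp)

lemma integrable_mul_L2 {f g : ℝ → ℂ} (hf : MemLp f 2 (volume : Measure ℝ))
    (hg : MemLp g 2 (volume : Measure ℝ)) :
    Integrable (fun t => f t * g t) volume := by
  have := hg.smul (φ := f) hf (r := 1)
  exact memLp_one_iff_integrable.mp this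

lemma memL2_tfShift (x ω : ℝ) {h : ℝ → ℂ} (hh : MemLp h 2 (volume : Measure ℝ)) :
    MemLp (tfShift x ω h) 2 (volume : Measure ℝ) := by
  have ht : MemLp (fun t : ℝ => h (t - x)) 2 (volume : Measure ℝ) :=
    hh.comp_measurePreserving (measurePreserving_sub_right volume x)
  refine MemLp.of_le ht ?_ (Filter.Eventually.of_forall fun t => ?_)
  · exact ((Complex.continuous_exp.comp (by continuity)).aestronglyMeasurable).mul ht.1
  · have : ‖Complex.exp (2 * Real.pi * Complex.I * ω * t)‖ = 1 := by
      rw [show (2 * Real.pi * Complex.I * ω * t : ℂ) = ((2 * Real.pi * ω * t : ℝ) : ℂ) * Complex.I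
        by push_cast; ring]
      exact Complex.norm_exp_ofReal_mul_I _
    simp [tfShift, this]

/-- **Battle's first biorthogonality identity.** If `t·g(t)` and `t·h(t)` are in `L²` and
`⟨g, π(k,l)h⟩ = δ_{(k,l),(0,0)}`, then `⟨∇₁g, π(k,l)h⟩ = −⟨π(−k,−l)g, ∇₁h⟩`. -/
theorem battle_first_identity (g h : ℝ → ℂ)
    (hg : MemLp g 2 (volume : Measure ℝ)) (hh : MemLp h 2 (volume : Measure ℝ))
    (htg : MemLp (fun t : ℝ => (t : ℂ) * g t) 2 (volume : Measure ℝ))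
    (hth : MemLp (fun t : ℝ => (t : ℂ) * h t) 2 (volume : Measure ℝ))
    (hbiorth : ∀ k l : ℤ, L2inner g (tfShift k l h) = if k = 0 ∧ l = 0 then 1 else 0) :
    ∀ k l : ℤ,
      L2inner (nabla₁ g) (tfShift k l h) = -L2inner (tfShift (-k) (-l) g) (nabla₁ h) := by
  intro k l
  have hS : MemLp (tfShift k l h) 2 (volume : Measure ℝ) := memL2_tfShift _ _ hh
  have hcS := memL2_conj hS
  have h1 : Integrable (fun t : ℝ => nabla₁ g t * (starRingEnd ℂ) (tfShift (↑k) (↑l) h t))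
      volume := by
    refine integrable_mul_L2 ?_ hcS
    have e : nabla₁ g = fun t : ℝ => (2 * Real.pi * Complex.I : ℂ) * ((t : ℂ) * g t) :=
      funext fun t => by simp only [nabla₁]; ring
    rw [e]
    exact htg.const_mul _
  have h0 : Integrable (fun t : ℝ => g t * (starRingEnd ℂ) (tfShift (↑k) (↑l) h t)) volume :=
    integrable_mul_L2 hg hcS
  -- the key pointwise identity
  have key : ∀ t : ℝ,
      tfShift (↑(-k)) (↑(-l)) g (t - (k : ℝ)) * (starRingEnd ℂ) (nabla₁ h (t - (k : ℝ)))
        = 2 * Real.pi * Complex.I * (k : ℂ)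
            * (g t * (starRingEnd ℂ) (tfShift (↑k) (↑l) h t))
          - nabla₁ g t * (starRingEnd ℂ) (tfShift (↑k) (↑l) h t) := by
    intro t
    have harg : (t - (k : ℝ)) - ((-k : ℤ) : ℝ) = t := by push_cast; ring
    have hexp' : Complex.exp (2 * Real.pi * Complex.I * (((-l : ℤ) : ℝ) : ℂ) * ((t - (k : ℝ) : ℝ) : ℂ))
        = Complex.exp (2 * (Real.pi : ℂ) * -Complex.I * (((l : ℤ) : ℝ) : ℂ) * (t : ℂ)) := by
      rw [← mul_one (Complex.exp (2 * (Real.pi : ℂ) * -Complex.I * (((l : ℤ) : ℝ) : ℂ) * (t : ℂ))),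
        ← Complex.exp_int_mul_two_pi_mul_I (l * k), ← Complex.exp_add]
      congr 1
      push_cast
      ring
    simp only [tfShift, nabla₁, harg, map_mul, map_ofNat, Complex.conj_I, Complex.conj_ofReal,
      ← Complex.exp_conj]
    rw [hexp']
    push_cast
    ring
  have hG : Integrable (fun t : ℝ =>
      tfShift (↑(-k)) (↑(-l)) g (t - (k : ℝ)) * (starRingEnd ℂ) (nabla₁ h (t - (k : ℝ))))
      volume := by
    rw [funext key]
    exact (h0.const_mul _).sub h1
  have hB : L2inner (tfShift (↑(-k)) (↑(-l)) g) (nabla₁ h)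
      = ∫ t : ℝ, tfShift (↑(-k)) (↑(-l)) g (t - (k : ℝ))
          * (starRingEnd ℂ) (nabla₁ h (t - (k : ℝ))) := by
    exact (integral_sub_right_eq_self
      (fun t : ℝ => tfShift (↑(-k)) (↑(-l)) g t * (starRingEnd ℂ) (nabla₁ h t)) (k : ℝ)).symm
  have hsum : L2inner (nabla₁ g) (tfShift (↑k) (↑l) h)
      + L2inner (tfShift (↑(-k)) (↑(-l)) g) (nabla₁ h) = 0 := by
    rw [hB, L2inner]
    rw [show (∫ t : ℝ, tfShift (↑(-k)) (↑(-l)) g (t - (k : ℝ))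
        * (starRingEnd ℂ) (nabla₁ h (t - (k : ℝ)))) = ∫ t : ℝ,
        (2 * Real.pi * Complex.I * (k : ℂ)
            * (g t * (starRingEnd ℂ) (tfShift (↑k) (↑l) h t))
          - nabla₁ g t * (starRingEnd ℂ) (tfShift (↑k) (↑l) h t)) by
      exact integral_congr_ae (Filter.Eventually.of_forall key)]
    rw [integral_sub (h0.const_mul _) h1, integral_const_mul]
    have hb := hbiorth k l
    rw [L2inner] at hb
    rw [hb]
    by_cases hk : k = 0
    · subst hk; simp
    · rw [if_neg (by tauto)]; ring
  -- push_cast alignment: goal uses (-↑k) etc.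
  have : ((-k : ℤ) : ℝ) = -(k : ℝ) := by push_cast; ring
  rw [eq_neg_iff_add_eq_zero]
  convert hsum using 3 <;> push_cast <;> ring
end
end

section
/- Rapid decay of Gabor coefficients of Schwartz functions: Let θ > 0 and f, g ∈ 𝒮(ℝ). Then for every N ∈ ℕ there exists a constant C > 0 such that |⟨f, π(θk, l)g⟩| ≤ C (1 + |k| + |l|)^{−N} for all k, l ∈ ℤ; that is, the double sequence (k,l) ↦ ⟨f, π(θk,l)g⟩ is rapidly decreasing on ℤ². -/
open MeasureTheory Complex

noncomputable section

namespace GaborAux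

lemma key_ineq (x t : ℝ) : 1 + |x| ≤ (1 + |t|) * (1 + |t - x|) := by
  have h1 : |x| ≤ |t| + |t - x| := by
    calc |x| = |t - (t - x)| := by ring_nf
    _ ≤ |t| + |t - x| := abs_sub _ _
  nlinarith [abs_nonneg t, abs_nonneg (t - x), mul_nonneg (abs_nonneg t) (abs_nonneg (t - x))]

/-- Pointwise polynomial decay of a Schwartz function. -/
lemma schwartz_decay (φ : SchwartzMap ℝ ℂ) (M : ℕ) :
    ∃ C : ℝ, 0 < C ∧ ∀ t : ℝ, ‖φ t‖ ≤ C * ((1 + |t|) ^ M)⁻¹ := by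
  set S : ℝ := ((Finset.Iic ((M : ℕ), (0 : ℕ))).sup
    (fun m => SchwartzMap.seminorm ℝ m.1 m.2)) φ with hSdef
  have hS : 0 ≤ S := apply_nonneg _ φ
  refine ⟨2 ^ M * S + 1, by positivity, fun t => ?_⟩
  have h := SchwartzMap.one_add_le_sup_seminorm_apply (𝕜 := ℝ) (m := (M, 0)) (k := M) (n := 0)
    le_rfl le_rfl φ t
  rw [norm_iteratedFDeriv_zero] at h
  have hP : (0:ℝ) < (1 + |t|) ^ M := by positivity
  have h2 : ‖φ t‖ * (1 + |t|) ^ M ≤ 2 ^ M * S + 1 := by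
    have : (1 + |t|) ^ M * ‖φ t‖ ≤ 2 ^ M * S := by simpa [Real.norm_eq_abs] using h
    nlinarith
  calc ‖φ t‖ = ‖φ t‖ * (1 + |t|) ^ M * ((1 + |t|) ^ M)⁻¹ := by field_simp
  _ ≤ (2 ^ M * S + 1) * ((1 + |t|) ^ M)⁻¹ := by gcongr

/-- Integrability of a product of a Schwartz function and a shifted Schwartz function. -/
lemma integrable_shift (φ ψ : SchwartzMap ℝ ℂ) (x : ℝ) :
    Integrable (fun t : ℝ => ‖φ t‖ * ‖ψ (t - x)‖) := by
  have hmeas : AEStronglyMeasurable (fun t : ℝ => ‖φ t‖ * ‖ψ (t - x)‖)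
      (volume : Measure ℝ) :=
    (φ.continuous.norm.mul
      ((ψ.continuous.comp (continuous_id.sub continuous_const)).norm)).aestronglyMeasurable
  refine (φ.integrable.norm.mul_const ((SchwartzMap.seminorm ℝ 0 0) ψ)).mono' hmeas
    (Filter.Eventually.of_forall fun t => ?_)
  have h1 : ‖ψ (t - x)‖ ≤ (SchwartzMap.seminorm ℝ 0 0) ψ :=
    SchwartzMap.norm_le_seminorm ℝ ψ (t - x)
  have h2 : (0:ℝ) ≤ ‖φ t‖ * ‖ψ (t - x)‖ := by positivity
  simpa [Real.norm_eq_abs, _root_.abs_of_nonneg h2] using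
    mul_le_mul_of_nonneg_left h1 (norm_nonneg (φ t))

/-- The decaying convolution-type bound. -/
lemma conv_decay (φ ψ : SchwartzMap ℝ ℂ) (M : ℕ) :
    ∃ C : ℝ, 0 < C ∧ ∀ x : ℝ,
      (∫ t : ℝ, ‖φ t‖ * ‖ψ (t - x)‖) ≤ C * ((1 + |x|) ^ M)⁻¹ := by
  obtain ⟨C1, hC1, h1⟩ := schwartz_decay φ (M + 2)
  obtain ⟨C2, hC2, h2⟩ := schwartz_decay ψ M
  have J2 : Integrable (fun t : ℝ => ((1 + |t|) ^ (2:ℕ))⁻¹) := by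
    have := integrable_one_add_norm (E := ℝ) (μ := volume) (r := 2) (by norm_num)
    refine this.congr (Filter.Eventually.of_forall fun t => ?_)
    show (1 + ‖t‖) ^ (-(2:ℝ)) = ((1 + |t|) ^ (2:ℕ))⁻¹
    rw [Real.rpow_neg (by positivity), show ((2:ℝ)) = ((2:ℕ):ℝ) by norm_num,
      Real.rpow_natCast, Real.norm_eq_abs]
  set K : ℝ := ∫ t : ℝ, ((1 + |t|) ^ (2:ℕ))⁻¹ with hK
  have hK0 : 0 ≤ K := integral_nonneg fun t => by positivity
  refine ⟨C1 * C2 * (K + 1), by positivity, fun x => ?_⟩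
  have hPx : (0:ℝ) < (1 + |x|) ^ M := by positivity
  have hprod : ∀ t : ℝ, ‖φ t‖ * ‖ψ (t - x)‖ ≤
      (C1 * C2 * ((1 + |x|) ^ M)⁻¹) * ((1 + |t|) ^ (2:ℕ))⁻¹ := by
    intro t
    have key : (1 + |x|) ^ M * (1 + |t|) ^ (2:ℕ) ≤ (1 + |t|) ^ (M + 2) * (1 + |t - x|) ^ M := by
      have k1 : (1 + |x|) ^ M ≤ ((1 + |t|) * (1 + |t - x|)) ^ M :=
        pow_le_pow_left₀ (by positivity) (key_ineq x t) M
      calc (1 + |x|) ^ M * (1 + |t|) ^ (2:ℕ)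
          ≤ ((1 + |t|) * (1 + |t - x|)) ^ M * (1 + |t|) ^ (2:ℕ) := by gcongr
      _ = (1 + |t|) ^ (M + 2) * (1 + |t - x|) ^ M := by rw [mul_pow]; ring
    calc ‖φ t‖ * ‖ψ (t - x)‖
        ≤ (C1 * ((1 + |t|) ^ (M + 2))⁻¹) * (C2 * ((1 + |t - x|) ^ M)⁻¹) :=
          mul_le_mul (h1 t) (h2 (t - x)) (norm_nonneg _) (by positivity)
    _ = (C1 * C2) * ((1 + |t|) ^ (M + 2) * (1 + |t - x|) ^ M)⁻¹ := by
          rw [mul_inv]; ring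
    _ ≤ (C1 * C2) * ((1 + |x|) ^ M * (1 + |t|) ^ (2:ℕ))⁻¹ :=
          mul_le_mul_of_nonneg_left (inv_anti₀ (by positivity) key) (by positivity)
    _ = (C1 * C2 * ((1 + |x|) ^ M)⁻¹) * ((1 + |t|) ^ (2:ℕ))⁻¹ := by
          rw [mul_inv]; ring
  calc (∫ t : ℝ, ‖φ t‖ * ‖ψ (t - x)‖)
      ≤ ∫ t : ℝ, (C1 * C2 * ((1 + |x|) ^ M)⁻¹) * ((1 + |t|) ^ (2:ℕ))⁻¹ :=
        integral_mono_of_nonneg (Filter.Eventually.of_forall fun t => by positivity)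
          (J2.const_mul _) (Filter.Eventually.of_forall hprod)
  _ = (C1 * C2 * ((1 + |x|) ^ M)⁻¹) * K := integral_const_mul _ _
  _ = (C1 * C2 * K) * ((1 + |x|) ^ M)⁻¹ := by ring
  _ ≤ (C1 * C2 * (K + 1)) * ((1 + |x|) ^ M)⁻¹ := by
        have h := (inv_pos.mpr hPx).le
        nlinarith [mul_pos hC1 hC2]
end GaborAux

/-- Iterated derivative of a Schwartz map, as a Schwartz map. -/
def itD : ℕ → SchwartzMap ℝ ℂ → SchwartzMap ℝ ℂ
  | 0, φ => φ
  | n+1, φ => SchwartzMap.derivCLM ℝ ℂ (itD n φ)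

lemma itD_coe (n : ℕ) (φ : SchwartzMap ℝ ℂ) : ⇑(itD n φ) = iteratedDeriv n ⇑φ := by
  induction n with
  | zero => simp [itD, iteratedDeriv_zero]
  | succ n ih =>
    funext t
    show SchwartzMap.derivCLM ℝ ℂ (itD n φ) t = _
    rw [SchwartzMap.derivCLM_apply, ih, ← iteratedDeriv_succ]

namespace GaborAux

lemma norm_iteratedFDeriv_conj_shift (g : SchwartzMap ℝ ℂ) (x : ℝ) (j : ℕ) (t : ℝ) :
    ‖iteratedFDeriv ℝ j (fun s : ℝ => (starRingEnd ℂ) (g (s - x))) t‖ =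
      ‖iteratedDeriv j (⇑g) (t - x)‖ := by
  have e1 : (fun s : ℝ => (starRingEnd ℂ) (g (s - x))) =
      (RCLike.conjLIE (K := ℂ)) ∘ (fun s : ℝ => g (s + -x)) := by
    funext s
    simp [RCLike.conjLIE_apply, sub_eq_add_neg, Function.comp]
  rw [e1, LinearIsometryEquiv.norm_iteratedFDeriv_comp_left,
    norm_iteratedFDeriv_eq_norm_iteratedDeriv, iteratedDeriv_comp_add_const]
  simp [sub_eq_add_neg]

lemma iterated_bound (f g : SchwartzMap ℝ ℂ) (x : ℝ) (n : ℕ) (t : ℝ) :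
    ‖iteratedDeriv n (fun s : ℝ => f s * (starRingEnd ℂ) (g (s - x))) t‖ ≤
      ∑ i ∈ Finset.range (n + 1),
        (n.choose i : ℝ) * ‖itD i f t‖ * ‖itD (n - i) g (t - x)‖ := by
  have hf : ContDiff ℝ ((n : ℕ∞)) ⇑f := f.smooth n
  have hg1 : ContDiff ℝ ((n : ℕ∞)) (fun s : ℝ => g (s - x)) :=
    (g.smooth n).comp (contDiff_id.sub contDiff_const)
  have hg : ContDiff ℝ ((n : ℕ∞)) (fun s : ℝ => (starRingEnd ℂ) (g (s - x))) := by
    have := Complex.conjCLE.contDiff.comp hg1 (n := (n : ℕ∞))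
    exact this
  rw [← norm_iteratedFDeriv_eq_norm_iteratedDeriv]
  refine le_trans (norm_iteratedFDeriv_mul_le (𝕜 := ℝ) hf hg t (by exact_mod_cast le_rfl)) ?_
  refine le_of_eq (Finset.sum_congr rfl fun i _ => ?_)
  rw [itD_coe, itD_coe, norm_iteratedFDeriv_eq_norm_iteratedDeriv,
    norm_iteratedFDeriv_conj_shift]

lemma L2inner_eq (f g : SchwartzMap ℝ ℂ) (x ω : ℝ) :
    L2inner (⇑f) (tfShift x ω ⇑g) =
      FourierTransform.fourier (fun t : ℝ => f t * (starRingEnd ℂ) (g (t - x))) ω := by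
  rw [Real.fourier_eq']
  unfold L2inner tfShift
  congr 1
  funext t
  simp only [RCLike.inner_apply, conj_trivial, smul_eq_mul]
  rw [map_mul]
  have hconj : (starRingEnd ℂ) (Complex.exp (2 * Real.pi * Complex.I * ω * t)) =
      Complex.exp (((-2 * Real.pi * (t * ω) : ℝ) : ℂ) * Complex.I) := by
    rw [← Complex.exp_conj]
    congr 1
    simp only [map_mul, Complex.conj_I, Complex.conj_ofReal, map_ofNat]
    push_cast
    ring
  rw [hconj]
  ring

end GaborAux

open GaborAux in
/-- **Rapid decay of Gabor coefficients of Schwartz functions.** For Schwartz `f, g` and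
every `N ∈ ℕ` there is `C > 0` with `|⟨f, π(θk,l)g⟩| ≤ C (1 + |k| + |l|)^{−N}` for all
`k, l ∈ ℤ`. -/
theorem gabor_coefficients_rapid_decay (θ : ℝ) (hθ : 0 < θ) (f g : SchwartzMap ℝ ℂ) :
    ∀ N : ℕ, ∃ C : ℝ, 0 < C ∧ ∀ k l : ℤ,
      ‖L2inner (f : ℝ → ℂ) (tfShift (θ * k) l (g : ℝ → ℂ))‖ ≤
        C * ((1 + |(k : ℝ)| + |(l : ℝ)|) ^ N)⁻¹ := by
  intro N
  obtain ⟨B0, hB0, hB0le⟩ := conv_decay f g N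
  have H : ∀ i : ℕ, ∃ C : ℝ, 0 < C ∧ ∀ x : ℝ,
      (∫ t : ℝ, ‖itD i f t‖ * ‖itD (N - i) g (t - x)‖) ≤ C * ((1 + |x|) ^ N)⁻¹ :=
    fun i => conv_decay (itD i f) (itD (N - i) g) N
  choose B hBpos hBle using H
  set A : ℝ := ∑ i ∈ Finset.range (N + 1), (N.choose i : ℝ) * B i with hA
  have hA0 : 0 ≤ A :=
    Finset.sum_nonneg fun i _ => mul_nonneg (Nat.cast_nonneg _) (hBpos i).le
  set c : ℝ := max 1 θ⁻¹ with hc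
  have hc1 : (1:ℝ) ≤ c := le_max_left _ _
  refine ⟨2 ^ N * (B0 + A) * c ^ N,
    mul_pos (mul_pos (pow_pos two_pos N) (by linarith)) (pow_pos (by linarith) N),
    fun k l => ?_⟩
  set x : ℝ := θ * k with hx
  set ω : ℝ := (l : ℝ) with hω
  set h : ℝ → ℂ := fun t => f t * (starRingEnd ℂ) (g (t - x)) with hh
  -- smoothness of h
  have hsm : ContDiff ℝ ((⊤ : ℕ∞)) h := by
    have hg1 : ContDiff ℝ ((⊤ : ℕ∞)) (fun s : ℝ => g (s - x)) :=
      (g.smooth ⊤).comp (contDiff_id.sub contDiff_const)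
    have hg2 : ContDiff ℝ ((⊤ : ℕ∞)) (fun s : ℝ => (starRingEnd ℂ) (g (s - x))) := by
      have := Complex.conjCLE.contDiff.comp hg1 (n := ((⊤ : ℕ∞)))
      exact this
    exact (f.smooth ⊤).mul hg2
  -- integrable majorants
  have hmajint : ∀ n : ℕ, Integrable (fun t : ℝ =>
      ∑ i ∈ Finset.range (n + 1), (n.choose i : ℝ) * ‖itD i f t‖ * ‖itD (n - i) g (t - x)‖) := by
    intro n
    refine integrable_finset_sum _ fun i _ => ?_
    simpa [mul_assoc] using (integrable_shift (itD i f) (itD (n - i) g) x).const_mul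
      (n.choose i : ℝ)
  have hint : ∀ n : ℕ, Integrable (iteratedDeriv n h) := by
    intro n
    refine (hmajint n).mono' ?_ (Filter.Eventually.of_forall fun t => iterated_bound f g x n t)
    exact (hsm.continuous_iteratedDeriv n (by exact_mod_cast le_top)).aestronglyMeasurable
  have hP : (0:ℝ) < (1 + |x|) ^ N := by positivity
  -- Estimate E1
  have E1 : ‖FourierTransform.fourier h ω‖ ≤ B0 * ((1 + |x|) ^ N)⁻¹ := by
    refine le_trans (VectorFourier.norm_fourierIntegral_le_integral_norm _ _ _ _ _) ?_
    have heq : (∫ t : ℝ, ‖h t‖) = ∫ t : ℝ, ‖f t‖ * ‖g (t - x)‖ := by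
      congr 1
      funext t
      simp [hh, norm_mul]
    rw [heq]
    exact hB0le x
  -- Estimate E2
  have E2 : (2 * Real.pi * |ω|) ^ N * ‖FourierTransform.fourier h ω‖ ≤ A * ((1 + |x|) ^ N)⁻¹ := by
    have hid := Real.fourier_iteratedDeriv (N := (⊤ : ℕ∞)) (n := N) hsm
      (fun n _ => hint n) le_top
    have e : ‖FourierTransform.fourier (iteratedDeriv N h) ω‖ =
        (2 * Real.pi * |ω|) ^ N * ‖FourierTransform.fourier h ω‖ := by
      rw [hid]
      rw [norm_smul, norm_pow]
      congr 2
      simp only [norm_mul, Complex.norm_real, Complex.norm_I, mul_one, Real.norm_eq_abs,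
        Complex.norm_ofNat]
      rw [_root_.abs_of_pos Real.pi_pos]
    rw [← e]
    refine le_trans (VectorFourier.norm_fourierIntegral_le_integral_norm _ _ _ _ _) ?_
    calc (∫ t : ℝ, ‖iteratedDeriv N h t‖)
        ≤ ∫ t : ℝ, ∑ i ∈ Finset.range (N + 1),
            (N.choose i : ℝ) * ‖itD i f t‖ * ‖itD (N - i) g (t - x)‖ :=
          integral_mono_of_nonneg (Filter.Eventually.of_forall fun t => norm_nonneg _)
            (hmajint N) (Filter.Eventually.of_forall fun t => iterated_bound f g x N t)
    _ = ∑ i ∈ Finset.range (N + 1),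
          (N.choose i : ℝ) * ∫ t : ℝ, ‖itD i f t‖ * ‖itD (N - i) g (t - x)‖ := by
          rw [integral_finset_sum _ (fun i _ => by
            simpa [mul_assoc] using (integrable_shift (itD i f) (itD (N - i) g) x).const_mul
              (N.choose i : ℝ))]
          refine Finset.sum_congr rfl fun i _ => ?_
          rw [← integral_const_mul]
          exact integral_congr_ae (Filter.Eventually.of_forall fun t => by ring)
    _ ≤ ∑ i ∈ Finset.range (N + 1), (N.choose i : ℝ) * (B i * ((1 + |x|) ^ N)⁻¹) :=
          Finset.sum_le_sum fun i _ =>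
            mul_le_mul_of_nonneg_left (hBle i x) (Nat.cast_nonneg _)
    _ = A * ((1 + |x|) ^ N)⁻¹ := by
          rw [hA, Finset.sum_mul]
          exact Finset.sum_congr rfl fun i _ => by ring
  -- combine the two estimates
  have habs : |ω| ^ N * ‖FourierTransform.fourier h ω‖ ≤ A * ((1 + |x|) ^ N)⁻¹ := by
    refine le_trans ?_ E2
    have : |ω| ^ N ≤ (2 * Real.pi * |ω|) ^ N := by
      refine pow_le_pow_left₀ (abs_nonneg _) ?_ N
      nlinarith [Real.pi_gt_three, abs_nonneg ω]
    exact mul_le_mul_of_nonneg_right this (norm_nonneg _)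
  have h2N : (1 + |ω|) ^ N ≤ 2 ^ N * (1 + |ω| ^ N) := by
    have step1 : (1 + |ω|) ^ N ≤ (2 * max 1 |ω|) ^ N := by
      refine pow_le_pow_left₀ (by positivity) ?_ N
      rcases le_total 1 |ω| with hcase | hcase
      · rw [max_eq_right hcase]; linarith
      · rw [max_eq_left hcase]; linarith
    have step2 : (max 1 |ω|) ^ N ≤ 1 + |ω| ^ N := by
      rcases le_total 1 |ω| with hcase | hcase
      · rw [max_eq_right hcase]
        nlinarith [pow_nonneg (abs_nonneg ω) N]
      · rw [max_eq_left hcase]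
        simp only [one_pow]
        nlinarith [pow_nonneg (abs_nonneg ω) N]
    calc (1 + |ω|) ^ N ≤ (2 * max 1 |ω|) ^ N := step1
    _ = 2 ^ N * (max 1 |ω|) ^ N := by rw [mul_pow]
    _ ≤ 2 ^ N * (1 + |ω| ^ N) := by gcongr
  have key : ‖FourierTransform.fourier h ω‖ * ((1 + |x|) ^ N * (1 + |ω|) ^ N) ≤
      2 ^ N * (B0 + A) := by
    have e1' : ‖FourierTransform.fourier h ω‖ * (1 + |x|) ^ N ≤ B0 := by
      have h3 := mul_le_mul_of_nonneg_right E1 hP.le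
      rwa [mul_assoc, inv_mul_cancel₀ hP.ne', mul_one] at h3
    have e2' : ‖FourierTransform.fourier h ω‖ * (1 + |x|) ^ N * |ω| ^ N ≤ A := by
      have h3 := mul_le_mul_of_nonneg_right habs hP.le
      have hcancel : A * ((1 + |x|) ^ N)⁻¹ * (1 + |x|) ^ N = A := by
        field_simp
      rw [hcancel] at h3
      calc ‖FourierTransform.fourier h ω‖ * (1 + |x|) ^ N * |ω| ^ N
          = |ω| ^ N * ‖FourierTransform.fourier h ω‖ * (1 + |x|) ^ N * 1 := by ring
      _ = |ω| ^ N * ‖FourierTransform.fourier h ω‖ * (1 + |x|) ^ N := by ring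
      _ ≤ A := by linarith [h3]
    calc ‖FourierTransform.fourier h ω‖ * ((1 + |x|) ^ N * (1 + |ω|) ^ N)
        ≤ ‖FourierTransform.fourier h ω‖ * ((1 + |x|) ^ N * (2 ^ N * (1 + |ω| ^ N))) := by
          gcongr
    _ = 2 ^ N * (‖FourierTransform.fourier h ω‖ * (1 + |x|) ^ N
          + ‖FourierTransform.fourier h ω‖ * (1 + |x|) ^ N * |ω| ^ N) := by ring
    _ ≤ 2 ^ N * (B0 + A) := by
          have h2 : (0:ℝ) ≤ 2 ^ N := by positivity
          nlinarith [e1', e2']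
  -- comparison of weights
  have hcomp : (1 + |(k:ℝ)| + |(l:ℝ)|) ^ N ≤ c ^ N * ((1 + |x|) ^ N * (1 + |ω|) ^ N) := by
    have hxabs : |x| = θ * |(k:ℝ)| := by
      rw [hx, abs_mul, abs_of_pos hθ]
    have hck : 1 + |(k:ℝ)| ≤ c * (1 + |x|) := by
      rw [hxabs]
      have hcθ : 1 ≤ c * θ := by
        have : θ⁻¹ ≤ c := le_max_right _ _
        calc (1:ℝ) = θ⁻¹ * θ := by field_simp
        _ ≤ c * θ := mul_le_mul_of_nonneg_right this hθ.le
      nlinarith [abs_nonneg (k:ℝ)]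
    have h3 : 1 + |(k:ℝ)| + |(l:ℝ)| ≤ (1 + |(k:ℝ)|) * (1 + |(l:ℝ)|) := by
      nlinarith [abs_nonneg (k:ℝ), abs_nonneg (l:ℝ), mul_nonneg (abs_nonneg (k:ℝ)) (abs_nonneg (l:ℝ))]
    have h4 : 1 + |(k:ℝ)| + |(l:ℝ)| ≤ c * ((1 + |x|) * (1 + |ω|)) := by
      calc 1 + |(k:ℝ)| + |(l:ℝ)| ≤ (1 + |(k:ℝ)|) * (1 + |(l:ℝ)|) := h3
      _ ≤ (c * (1 + |x|)) * (1 + |(l:ℝ)|) := by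
          gcongr
      _ = c * ((1 + |x|) * (1 + |ω|)) := by rw [hω]; ring
    calc (1 + |(k:ℝ)| + |(l:ℝ)|) ^ N ≤ (c * ((1 + |x|) * (1 + |ω|))) ^ N :=
          pow_le_pow_left₀ (by positivity) h4 N
    _ = c ^ N * ((1 + |x|) ^ N * (1 + |ω|) ^ N) := by rw [mul_pow, mul_pow]
  -- conclude
  have hQ : (0:ℝ) < (1 + |(k:ℝ)| + |(l:ℝ)|) ^ N := by positivity
  rw [show L2inner (f : ℝ → ℂ) (tfShift (θ * k) l (g : ℝ → ℂ)) =
      FourierTransform.fourier h ω from by rw [hh, hx, hω]; exact L2inner_eq f g (θ * k) l]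
  rw [← div_eq_mul_inv, le_div_iff₀ hQ]
  calc ‖FourierTransform.fourier h ω‖ * (1 + |(k:ℝ)| + |(l:ℝ)|) ^ N
      ≤ ‖FourierTransform.fourier h ω‖ * (c ^ N * ((1 + |x|) ^ N * (1 + |ω|) ^ N)) := by
        gcongr
  _ = c ^ N * (‖FourierTransform.fourier h ω‖ * ((1 + |x|) ^ N * (1 + |ω|) ^ N)) := by ring
  _ ≤ c ^ N * (2 ^ N * (B0 + A)) := by
        refine mul_le_mul_of_nonneg_left key (by positivity)
  _ = 2 ^ N * (B0 + A) * c ^ N := by ring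
end
end

section
/- Module action of rapidly decreasing coefficient sequences: Let θ > 0, let g ∈ 𝒮(ℝ), and let a : ℤ² → ℂ be rapidly decreasing, i.e. for every N ∈ ℕ the quantity sup_{k,l} (1+|k|+|l|)^N |a_{kl}| is finite. Then the series Σ_{k,l ∈ ℤ} a_{kl} (π(θk,l)g)(t) = Σ_{k,l ∈ ℤ} a_{kl} e^{2πilt} g(t − θk) converges absolutely for every t ∈ ℝ, and the resulting function belongs to 𝒮(ℝ). -/
open MeasureTheory Complex

noncomputable section

/-- A double sequence `a : ℤ² → ℂ` is rapidly decreasing if for every `N` the quantity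
`sup_{k,l} (1+|k|+|l|)^N |a_{kl}|` is finite. -/
def RapidlyDecreasing (a : ℤ × ℤ → ℂ) : Prop :=
  ∀ N : ℕ, ∃ C : ℝ, ∀ kl : ℤ × ℤ,
    (1 + |(kl.1 : ℝ)| + |(kl.2 : ℝ)|) ^ N * ‖a kl‖ ≤ C

open scoped ContDiff SchwartzMap

namespace ModuleActionAux

lemma iteratedDeriv_cexp_real (c : ℂ) (n : ℕ) :
    iteratedDeriv n (fun t : ℝ => Complex.exp (c * t)) =
      fun t : ℝ => c ^ n * Complex.exp (c * t) := by
  induction n with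
  | zero => simp
  | succ n ih =>
    rw [iteratedDeriv_succ, ih]
    funext x
    have h1 : HasDerivAt (fun t : ℝ => c * (t : ℂ)) c x := by
      simpa using (Complex.ofRealCLM.hasDerivAt (x := x)).const_mul c
    have h3 : HasDerivAt (fun t : ℝ => c ^ n * Complex.exp (c * t))
        (c ^ n * (Complex.exp (c * x) * c)) x := h1.cexp.const_mul _
    rw [h3.deriv]; ring

lemma iteratedDeriv_comp_sub_const' (f : ℝ → ℂ) (s : ℝ) (n : ℕ) :
    iteratedDeriv n (fun t => f (t - s)) = fun t : ℝ => iteratedDeriv n f (t - s) := by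
  induction n with
  | zero => simp
  | succ n ih =>
    rw [iteratedDeriv_succ, ih]
    funext x
    rw [iteratedDeriv_succ]
    exact deriv_comp_sub_const (iteratedDeriv n f) s x

lemma tfShift_smooth (g : 𝓢(ℝ, ℂ)) (x w : ℝ) : ContDiff ℝ ∞ (tfShift x w ⇑g) := by
  unfold tfShift
  have h1 : ContDiff ℝ ∞ (fun t : ℝ => Complex.exp (2 * Real.pi * Complex.I * w * t)) :=
    Complex.contDiff_exp.comp (contDiff_const.mul Complex.ofRealCLM.contDiff)
  exact h1.mul (g.smooth'.comp (contDiff_id.sub contDiff_const))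

lemma natCast_le_infty (n : ℕ) : (n : WithTop ℕ∞) ≤ ∞ := by exact_mod_cast le_top

lemma shift_bound (θ : ℝ) (hθ : 0 < θ) (g : 𝓢(ℝ, ℂ)) (m n : ℕ) :
    ∃ C : ℝ, 0 ≤ C ∧ ∀ (k l : ℤ) (x : ℝ),
      ‖x‖ ^ m * ‖iteratedFDeriv ℝ n (tfShift (θ * k) l ⇑g) x‖ ≤
        C * (1 + |(k : ℝ)| + |(l : ℝ)|) ^ (m + n) := by
  have hS0 : (0:ℝ) ≤ 2 ^ m * ((Finset.Iic (m, n)).sup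
      (fun p => SchwartzMap.seminorm ℝ p.1 p.2)) g :=
    mul_nonneg (by positivity) (apply_nonneg _ _)
  set S : ℝ := 2 ^ m * ((Finset.Iic (m, n)).sup
      (fun p => SchwartzMap.seminorm ℝ p.1 p.2)) g with hSdef
  set M : ℝ := max 1 θ with hMdef
  have hM1 : (1:ℝ) ≤ M := le_max_left _ _
  have hMθ : θ ≤ M := le_max_right _ _
  have hM0 : (0:ℝ) ≤ M := le_trans zero_le_one hM1
  refine ⟨7 ^ n * (M ^ m * S), by positivity, ?_⟩
  intro k l x
  set c : ℂ := 2 * (Real.pi : ℂ) * Complex.I * ((l : ℝ) : ℂ) with hcdef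
  set y : ℝ := x - θ * k with hydef
  set P : ℝ := 1 + |(k : ℝ)| + |(l : ℝ)| with hPdef
  have hP1 : (1:ℝ) ≤ P := by
    have := abs_nonneg (k : ℝ); have := abs_nonneg (l : ℝ); simp only [hPdef]; linarith
  have hP0 : (0:ℝ) ≤ P := le_trans zero_le_one hP1
  -- inner bound
  have hinner : ∀ j, j ≤ n →
      ‖x‖ ^ m * ‖iteratedFDeriv ℝ j (⇑g) y‖ ≤ M ^ m * (1 + |(k : ℝ)|) ^ m * S := by
    intro j hj
    have hxy : ‖x‖ ≤ M * (1 + |(k : ℝ)|) * (1 + ‖y‖) := by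
      have h1 : ‖x‖ ≤ ‖y‖ + θ * |(k : ℝ)| := by
        have : x = y + θ * k := by simp [hydef]
        calc ‖x‖ = ‖y + θ * (k:ℝ)‖ := by rw [← this]
          _ ≤ ‖y‖ + ‖θ * (k:ℝ)‖ := norm_add_le _ _
          _ = ‖y‖ + θ * |(k:ℝ)| := by
              simp [Real.norm_eq_abs, abs_mul, abs_of_pos hθ]
      have hk0 := abs_nonneg (k : ℝ)
      have hy0 := norm_nonneg y
      nlinarith [mul_nonneg (sub_nonneg.mpr hM1) hy0, mul_nonneg (sub_nonneg.mpr hMθ) hk0,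
        mul_nonneg (mul_nonneg hM0 hk0) hy0]
    have h2 : ‖x‖ ^ m ≤ (M * (1 + |(k:ℝ)|)) ^ m * (1 + ‖y‖) ^ m := by
      calc ‖x‖ ^ m ≤ (M * (1 + |(k:ℝ)|) * (1 + ‖y‖)) ^ m :=
            pow_le_pow_left₀ (norm_nonneg x) hxy m
        _ = _ := by rw [mul_pow]
    have h3 : (1 + ‖y‖) ^ m * ‖iteratedFDeriv ℝ j (⇑g) y‖ ≤ S := by
      simpa [hSdef] using
        SchwartzMap.one_add_le_sup_seminorm_apply (𝕜 := ℝ) (m := (m, n))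
          (le_refl m) hj g y
    calc ‖x‖ ^ m * ‖iteratedFDeriv ℝ j (⇑g) y‖
        ≤ ((M * (1 + |(k:ℝ)|)) ^ m * (1 + ‖y‖) ^ m) * ‖iteratedFDeriv ℝ j (⇑g) y‖ :=
          mul_le_mul_of_nonneg_right h2 (norm_nonneg _)
      _ = (M * (1 + |(k:ℝ)|)) ^ m * ((1 + ‖y‖) ^ m * ‖iteratedFDeriv ℝ j (⇑g) y‖) := by ring
      _ ≤ (M * (1 + |(k:ℝ)|)) ^ m * S :=
          mul_le_mul_of_nonneg_left h3 (by positivity)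
      _ = M ^ m * (1 + |(k:ℝ)|) ^ m * S := by rw [mul_pow]
  -- smoothness
  have hce : ContDiff ℝ ∞ (fun t : ℝ => Complex.exp (c * t)) :=
    Complex.contDiff_exp.comp (contDiff_const.mul Complex.ofRealCLM.contDiff)
  have htg : ContDiff ℝ ∞ (fun t : ℝ => g (t - θ * k)) :=
    g.smooth'.comp (contDiff_id.sub contDiff_const)
  have heq : tfShift (θ * k) ((l : ℤ) : ℝ) ⇑g
      = fun t : ℝ => Complex.exp (c * t) * g (t - θ * k) := rfl
  have hnormc : ‖c‖ = 2 * Real.pi * |(l:ℝ)| := by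
    simp [hcdef, norm_mul, Complex.norm_real, Real.norm_eq_abs, abs_of_pos Real.pi_pos]
  have hexpnorm : ∀ (i : ℕ) (z : ℝ),
      ‖iteratedFDeriv ℝ i (fun t : ℝ => Complex.exp (c * t)) z‖ = (2 * Real.pi * |(l:ℝ)|) ^ i := by
    intro i z
    rw [norm_iteratedFDeriv_eq_norm_iteratedDeriv, iteratedDeriv_cexp_real]
    have h1 : ‖Complex.exp (c * z)‖ = 1 := by
      have : c * (z : ℂ) = ((2 * Real.pi * l * z : ℝ) : ℂ) * Complex.I := by
        rw [hcdef]; push_cast; ring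
      rw [this, Complex.norm_exp_ofReal_mul_I]
    rw [norm_mul, norm_pow, hnormc, h1, mul_one]
  have htransnorm : ∀ (i : ℕ) (z : ℝ),
      ‖iteratedFDeriv ℝ i (fun t : ℝ => g (t - θ * k)) z‖
        = ‖iteratedFDeriv ℝ i (⇑g) (z - θ * k)‖ := by
    intro i z
    rw [norm_iteratedFDeriv_eq_norm_iteratedDeriv, iteratedDeriv_comp_sub_const',
      ← norm_iteratedFDeriv_eq_norm_iteratedDeriv]
  have hprod := norm_iteratedFDeriv_mul_le hce htg x (natCast_le_infty n)
  have key1 : ‖x‖ ^ m * ‖iteratedFDeriv ℝ n (tfShift (θ * k) ((l:ℤ):ℝ) ⇑g) x‖ ≤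
      M ^ m * (1 + |(k:ℝ)|) ^ m * S * (2 * Real.pi * |(l:ℝ)| + 1) ^ n := by
    calc ‖x‖ ^ m * ‖iteratedFDeriv ℝ n (tfShift (θ * k) ((l:ℤ):ℝ) ⇑g) x‖
        ≤ ‖x‖ ^ m * ∑ i ∈ Finset.range (n + 1),
            (n.choose i : ℝ) * (2 * Real.pi * |(l:ℝ)|) ^ i
              * ‖iteratedFDeriv ℝ (n - i) (⇑g) y‖ := by
          refine mul_le_mul_of_nonneg_left ?_ (by positivity)
          rw [heq]
          refine le_trans hprod (le_of_eq ?_)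
          refine Finset.sum_congr rfl fun i _ => ?_
          rw [hexpnorm, htransnorm]
      _ = ∑ i ∈ Finset.range (n + 1), (n.choose i : ℝ) * (2 * Real.pi * |(l:ℝ)|) ^ i
            * (‖x‖ ^ m * ‖iteratedFDeriv ℝ (n - i) (⇑g) y‖) := by
          rw [Finset.mul_sum]
          exact Finset.sum_congr rfl fun i _ => by ring
      _ ≤ ∑ i ∈ Finset.range (n + 1), (n.choose i : ℝ) * (2 * Real.pi * |(l:ℝ)|) ^ i
            * (M ^ m * (1 + |(k:ℝ)|) ^ m * S) := by
          refine Finset.sum_le_sum fun i _ => ?_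
          exact mul_le_mul_of_nonneg_left (hinner _ (Nat.sub_le n i)) (by positivity)
      _ = (∑ i ∈ Finset.range (n + 1), (n.choose i : ℝ) * (2 * Real.pi * |(l:ℝ)|) ^ i)
            * (M ^ m * (1 + |(k:ℝ)|) ^ m * S) := by
          rw [Finset.sum_mul]
      _ = M ^ m * (1 + |(k:ℝ)|) ^ m * S * (2 * Real.pi * |(l:ℝ)| + 1) ^ n := by
          have hbin : (2 * Real.pi * |(l:ℝ)| + 1) ^ n
              = ∑ i ∈ Finset.range (n + 1), (n.choose i : ℝ) * (2 * Real.pi * |(l:ℝ)|) ^ i := by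
            rw [add_pow]
            exact Finset.sum_congr rfl fun i _ => by ring
          rw [hbin]; ring
  have h7 : 2 * Real.pi * |(l:ℝ)| + 1 ≤ 7 * P := by
    have hpi : Real.pi ≤ 3.15 := by linarith [Real.pi_lt_d2]
    have := abs_nonneg (l : ℝ); have := abs_nonneg (k : ℝ)
    simp only [hPdef]; nlinarith
  calc ‖x‖ ^ m * ‖iteratedFDeriv ℝ n (tfShift (θ * k) ((l:ℤ):ℝ) ⇑g) x‖
      ≤ M ^ m * (1 + |(k:ℝ)|) ^ m * S * (2 * Real.pi * |(l:ℝ)| + 1) ^ n := key1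
    _ ≤ M ^ m * P ^ m * S * (7 * P) ^ n := by
        have hkP : 1 + |(k:ℝ)| ≤ P := by
          have := abs_nonneg (l : ℝ); simp only [hPdef]; linarith
        have h1 : (1 + |(k:ℝ)|) ^ m ≤ P ^ m := pow_le_pow_left₀ (by positivity) hkP m
        have h2 : (2 * Real.pi * |(l:ℝ)| + 1) ^ n ≤ (7 * P) ^ n :=
          pow_le_pow_left₀ (by positivity) h7 n
        have hbase0 : (0:ℝ) ≤ 2 * Real.pi * |(l:ℝ)| + 1 := by positivity
        calc M ^ m * (1 + |(k:ℝ)|) ^ m * S * (2 * Real.pi * |(l:ℝ)| + 1) ^ n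
            ≤ M ^ m * P ^ m * S * (2 * Real.pi * |(l:ℝ)| + 1) ^ n := by
              have := mul_le_mul_of_nonneg_left h1 (pow_nonneg hM0 m)
              exact mul_le_mul_of_nonneg_right
                (mul_le_mul_of_nonneg_right this hS0) (by positivity)
          _ ≤ M ^ m * P ^ m * S * (7 * P) ^ n := by
              exact mul_le_mul_of_nonneg_left h2 (by positivity)
    _ = 7 ^ n * (M ^ m * S) * P ^ (m + n) := by
        rw [mul_pow, pow_add]; ring


lemma summable_invsq : Summable (fun k : ℤ => ((1 + |(k : ℝ)|) ^ 2)⁻¹) := by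
  have hnat : Summable (fun n : ℕ => ((1 + (n : ℝ)) ^ 2)⁻¹) := by
    have h0 : Summable (fun n : ℕ => 1 / (n : ℝ) ^ 2) :=
      Real.summable_one_div_nat_pow.mpr one_lt_two
    have h1 : Summable (fun n : ℕ => 1 / ((n + 1 : ℕ) : ℝ) ^ 2) :=
      (summable_nat_add_iff (f := fun n : ℕ => 1 / (n : ℝ) ^ 2) 1).mpr h0
    refine h1.congr fun n => ?_
    push_cast
    rw [one_div, add_comm (n:ℝ) 1]
  refine Summable.of_nat_of_neg (hnat.congr fun n => ?_) (hnat.congr fun n => ?_) <;> simp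



lemma key_bound (θ : ℝ) (hθ : 0 < θ) (g : 𝓢(ℝ, ℂ)) (a : ℤ × ℤ → ℂ)
    (ha : RapidlyDecreasing a) (m n : ℕ) :
    ∃ v : ℤ × ℤ → ℝ, Summable v ∧ ∀ (kl : ℤ × ℤ) (x : ℝ),
      ‖x‖ ^ m * ‖iteratedFDeriv ℝ n
        (fun t => a kl * tfShift (θ * kl.1) kl.2 (⇑g) t) x‖ ≤ v kl := by
  obtain ⟨C, hC0, hC⟩ := shift_bound θ hθ g m n
  obtain ⟨Ca, hCa⟩ := ha (m + n + 4)
  have hCa0 : 0 ≤ Ca := le_trans (by positivity) (hCa (0, 0))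
  refine ⟨fun kl => C * Ca * (((1 + |(kl.1 : ℝ)|) ^ 2)⁻¹ * ((1 + |(kl.2 : ℝ)|) ^ 2)⁻¹),
    ?_, ?_⟩
  · exact (summable_invsq.mul_of_nonneg summable_invsq
      (fun k => by positivity) (fun l => by positivity)).mul_left (C * Ca)
  · rintro ⟨k, l⟩ x
    have hsm : ContDiff ℝ (n : ℕ) (tfShift (θ * k) ((l : ℤ) : ℝ) ⇑g) :=
      (tfShift_smooth g _ _).of_le (natCast_le_infty n)
    have heq : (fun t => a (k, l) * tfShift (θ * k) ((l : ℤ) : ℝ) (⇑g) t)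
        = a (k, l) • tfShift (θ * k) ((l : ℤ) : ℝ) ⇑g := rfl
    have hnorm : ‖iteratedFDeriv ℝ n
        (fun t => a (k, l) * tfShift (θ * k) ((l : ℤ) : ℝ) (⇑g) t) x‖
        = ‖a (k, l)‖ * ‖iteratedFDeriv ℝ n (tfShift (θ * k) ((l : ℤ) : ℝ) ⇑g) x‖ := by
      rw [heq, iteratedFDeriv_const_smul_apply hsm.contDiffAt,
        norm_smul (a (k, l)) (iteratedFDeriv ℝ n (tfShift (θ * k) ((l : ℤ) : ℝ) ⇑g) x)]
    set P : ℝ := 1 + |(k : ℝ)| + |(l : ℝ)| with hPdef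
    have hP1 : (1:ℝ) ≤ P := by
      have := abs_nonneg (k : ℝ); have := abs_nonneg (l : ℝ); simp only [hPdef]; linarith
    have hP0 : (0:ℝ) ≤ P := le_trans zero_le_one hP1
    have hkl2 : (1 + |(k : ℝ)|) ^ 2 * (1 + |(l : ℝ)|) ^ 2 ≤ P ^ 4 := by
      have h2 : (1 + |(k : ℝ)|) * (1 + |(l : ℝ)|) ≤ P ^ 2 := by
        have := abs_nonneg (k : ℝ); have := abs_nonneg (l : ℝ)
        have := mul_nonneg (abs_nonneg (k : ℝ)) (abs_nonneg (l : ℝ))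
        simp only [hPdef]; nlinarith
      calc (1 + |(k : ℝ)|) ^ 2 * (1 + |(l : ℝ)|) ^ 2
          = ((1 + |(k : ℝ)|) * (1 + |(l : ℝ)|)) * ((1 + |(k : ℝ)|) * (1 + |(l : ℝ)|)) := by ring
        _ ≤ P ^ 2 * P ^ 2 := by
            have h0 : (0:ℝ) ≤ (1 + |(k : ℝ)|) * (1 + |(l : ℝ)|) := by positivity
            exact mul_le_mul h2 h2 h0 (by positivity)
        _ = P ^ 4 := by ring
    have hmain : ‖a (k, l)‖ * (C * P ^ (m + n))
        * ((1 + |(k : ℝ)|) ^ 2 * (1 + |(l : ℝ)|) ^ 2) ≤ C * Ca := by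
      calc ‖a (k, l)‖ * (C * P ^ (m + n)) * ((1 + |(k : ℝ)|) ^ 2 * (1 + |(l : ℝ)|) ^ 2)
          ≤ ‖a (k, l)‖ * (C * P ^ (m + n)) * P ^ 4 :=
            mul_le_mul_of_nonneg_left hkl2 (by positivity)
        _ = C * (P ^ (m + n + 4) * ‖a (k, l)‖) := by ring
        _ ≤ C * Ca := mul_le_mul_of_nonneg_left (hCa (k, l)) hC0
    have hfin : ‖a (k, l)‖ * (C * P ^ (m + n))
        ≤ C * Ca * (((1 + |(k : ℝ)|) ^ 2)⁻¹ * ((1 + |(l : ℝ)|) ^ 2)⁻¹) := by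
      rw [← mul_inv, ← div_eq_mul_inv]
      rw [le_div_iff₀ (by positivity)]
      exact hmain
    calc ‖x‖ ^ m * ‖iteratedFDeriv ℝ n
          (fun t => a (k, l) * tfShift (θ * k) ((l : ℤ) : ℝ) (⇑g) t) x‖
        = ‖a (k, l)‖ * (‖x‖ ^ m
            * ‖iteratedFDeriv ℝ n (tfShift (θ * k) ((l : ℤ) : ℝ) ⇑g) x‖) := by
          rw [hnorm]; ring
      _ ≤ ‖a (k, l)‖ * (C * P ^ (m + n)) :=
          mul_le_mul_of_nonneg_left (hC k l x) (norm_nonneg _)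
      _ ≤ C * Ca * (((1 + |(k : ℝ)|) ^ 2)⁻¹ * ((1 + |(l : ℝ)|) ^ 2)⁻¹) := hfin

end ModuleActionAux

open ModuleActionAux

/-- **Module action of rapidly decreasing coefficient sequences.** For `g` Schwartz and `a`
rapidly decreasing on `ℤ²`, the series `Σ_{k,l} a_{kl} (π(θk,l)g)(t)` converges absolutely
for every `t`, and the resulting function is a Schwartz function. -/
theorem module_action_schwartz (θ : ℝ) (hθ : 0 < θ) (g : SchwartzMap ℝ ℂ)
    (a : ℤ × ℤ → ℂ) (ha : RapidlyDecreasing a) :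
    (∀ t : ℝ, Summable fun kl : ℤ × ℤ =>
        ‖a kl * tfShift (θ * kl.1) kl.2 (g : ℝ → ℂ) t‖) ∧
    ∃ G : SchwartzMap ℝ ℂ, ∀ t : ℝ,
      (G : ℝ → ℂ) t = ∑' kl : ℤ × ℤ, a kl * tfShift (θ * kl.1) kl.2 (g : ℝ → ℂ) t := by
  have key := key_bound θ hθ g a ha
  choose v hvsum hvb using key
  have hf : ∀ kl : ℤ × ℤ, ContDiff ℝ (⊤ : ℕ∞)
      fun t => a kl * tfShift (θ * kl.1) kl.2 (⇑g) t :=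
    fun kl => contDiff_const.mul (tfShift_smooth g _ _)
  have hvb0 : ∀ (j : ℕ) (kl : ℤ × ℤ) (x : ℝ),
      ‖iteratedFDeriv ℝ j (fun t => a kl * tfShift (θ * kl.1) kl.2 (⇑g) t) x‖ ≤ v 0 j kl := by
    intro j kl x
    simpa using hvb 0 j kl x
  constructor
  · intro t
    refine Summable.of_nonneg_of_le (fun kl => norm_nonneg _) (fun kl => ?_) (hvsum 0 0)
    have := hvb0 0 kl t
    simpa [norm_iteratedFDeriv_zero] using this
  · refine ⟨⟨fun t => ∑' kl : ℤ × ℤ, a kl * tfShift (θ * kl.1) kl.2 (⇑g) t, ?_, ?_⟩,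
      fun t => rfl⟩
    · exact contDiff_tsum hf (fun j _ => hvsum 0 j) (fun j kl x _ => hvb0 j kl x)
    · intro p n
      refine ⟨∑' kl, v p n kl, fun x => ?_⟩
      have hrw := iteratedFDeriv_tsum_apply (N := (⊤ : ℕ∞)) hf (fun j _ => hvsum 0 j)
        (fun j kl x _ => hvb0 j kl x) (k := n) (le_top) x
      rw [hrw]
      have hsum1 : Summable fun kl : ℤ × ℤ => ‖x‖ ^ p * ‖iteratedFDeriv ℝ n
          (fun t => a kl * tfShift (θ * kl.1) kl.2 (⇑g) t) x‖ :=
        Summable.of_nonneg_of_le (fun kl => by positivity) (fun kl => hvb p n kl x) (hvsum p n)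
      have hsum0 : Summable fun kl : ℤ × ℤ => ‖iteratedFDeriv ℝ n
          (fun t => a kl * tfShift (θ * kl.1) kl.2 (⇑g) t) x‖ :=
        Summable.of_nonneg_of_le (fun kl => norm_nonneg _) (fun kl => hvb0 n kl x) (hvsum 0 n)
      calc ‖x‖ ^ p * ‖∑' kl : ℤ × ℤ, iteratedFDeriv ℝ n
            (fun t => a kl * tfShift (θ * kl.1) kl.2 (⇑g) t) x‖
          ≤ ‖x‖ ^ p * ∑' kl : ℤ × ℤ, ‖iteratedFDeriv ℝ n
            (fun t => a kl * tfShift (θ * kl.1) kl.2 (⇑g) t) x‖ :=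
            mul_le_mul_of_nonneg_left (norm_tsum_le_tsum_norm hsum0) (by positivity)
        _ = ∑' kl : ℤ × ℤ, ‖x‖ ^ p * ‖iteratedFDeriv ℝ n
            (fun t => a kl * tfShift (θ * kl.1) kl.2 (⇑g) t) x‖ := tsum_mul_left.symm
        _ ≤ ∑' kl, v p n kl := Summable.tsum_le_tsum (fun kl => hvb p n kl x) hsum1 (hvsum p n)
end
end
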